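/- Let d, e, f ∈ ℂ. If d ≠ e, e ≠ f, f ≠ d, and e ≠ 0, then the diagonal matrix diag(d,e,f) cannot be written as a product of two 3×3 complex Toeplitz matrices. -/

import Mathlib

def IsToeplitz {n : ℕ} (M : Matrix (Fin n) (Fin n) ℂ) : Prop :=
  ∀ (i j : Fin n) (hi : (i : ℕ) + 1 < n) (hj : (j : ℕ) + 1 < n),
    M i j = M ⟨i + 1, hi⟩ ⟨j + 1, hj⟩

open Matrix
theorem diag_def_not_product_of_two_toeplitz (d e f : ℂ)
    (hde : d ≠ e) (hef : e ≠ f) (hfd : f ≠ d) (he : e ≠ 0) :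
    ¬ ∃ T₁ T₂ : Matrix (Fin 3) (Fin 3) ℂ,
      IsToeplitz T₁ ∧ IsToeplitz T₂ ∧ T₁ * T₂ = Matrix.diagonal ![d, e, f] := by
  rintro ⟨A, B, hA, hB, hprod⟩
  -- Toeplitz equalities for A
  have hA00 : A 0 0 = A 1 1 := by simpa using hA 0 0 (by norm_num) (by norm_num)
  have hA11 : A 1 1 = A 2 2 := by simpa using hA 1 1 (by norm_num) (by norm_num)
  have hA01 : A 0 1 = A 1 2 := by simpa using hA 0 1 (by norm_num) (by norm_num)
  have hA10 : A 1 0 = A 2 1 := by simpa using hA 1 0 (by norm_num) (by norm_num)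
  -- Toeplitz equalities for B
  have hB00 : B 0 0 = B 1 1 := by simpa using hB 0 0 (by norm_num) (by norm_num)
  have hB11 : B 1 1 = B 2 2 := by simpa using hB 1 1 (by norm_num) (by norm_num)
  have hB01 : B 0 1 = B 1 2 := by simpa using hB 0 1 (by norm_num) (by norm_num)
  have hB10 : B 1 0 = B 2 1 := by simpa using hB 1 0 (by norm_num) (by norm_num)
  by_cases hdet : IsUnit B.det
  · -- B invertible: let V = B⁻¹; persymmetry of V plus Toeplitz of A = D * V
    -- forces the middle row of V to vanish, contradicting V * B = 1.
    set V := B⁻¹ with hVdef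
    have hr : B * V = 1 := Matrix.mul_nonsing_inv _ hdet
    have hl : V * B = 1 := Matrix.nonsing_inv_mul _ hdet
    have hAV : A = Matrix.diagonal ![d, e, f] * V := by
      rw [← hprod, Matrix.mul_assoc, hr, Matrix.mul_one]
    set J : Matrix (Fin 3) (Fin 3) ℂ := !![0,0,1;0,1,0;1,0,0] with hJdef
    have hJJ : J * J = 1 := by
      ext i j
      fin_cases i <;> fin_cases j <;>
        simp [hJdef, Matrix.mul_apply, Fin.sum_univ_three, Matrix.vecMul,
          Matrix.vecHead, Matrix.vecTail, dotProduct]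
    have hBp : J * Bᵀ * J = B := by
      ext i j
      fin_cases i <;> fin_cases j <;>
        simp [hJdef, Matrix.mul_apply, Fin.sum_univ_three, Matrix.vecMul,
          Matrix.vecHead, Matrix.vecTail, dotProduct] <;>
        simp [hB00, hB11, hB01, hB10]
    have hW : B * (J * Vᵀ * J) = 1 := by
      calc B * (J * Vᵀ * J) = (J * Bᵀ * J) * (J * Vᵀ * J) := by rw [hBp]
        _ = J * (Bᵀ * (J * J) * Vᵀ) * J := by noncomm_ring
        _ = J * (V * B)ᵀ * J := by rw [hJJ, Matrix.mul_one, ← Matrix.transpose_mul]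
        _ = 1 := by rw [hl, Matrix.transpose_one, Matrix.mul_one, hJJ]
    have hVW : V = J * Vᵀ * J := by
      calc V = V * (B * (J * Vᵀ * J)) := by rw [hW, Matrix.mul_one]
        _ = (V * B) * (J * Vᵀ * J) := by noncomm_ring
        _ = J * Vᵀ * J := by rw [hl, Matrix.one_mul]
    -- persymmetry entries
    have hp00 : V 0 0 = V 2 2 := by
      conv_lhs => rw [hVW]
      simp [hJdef, Matrix.mul_apply, Fin.sum_univ_three, Matrix.vecMul,
        Matrix.vecHead, Matrix.vecTail, dotProduct]
    have hp01 : V 0 1 = V 1 2 := by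
      conv_lhs => rw [hVW]
      simp [hJdef, Matrix.mul_apply, Fin.sum_univ_three, Matrix.vecMul,
        Matrix.vecHead, Matrix.vecTail, dotProduct]
    have hp10 : V 1 0 = V 2 1 := by
      conv_lhs => rw [hVW]
      simp [hJdef, Matrix.mul_apply, Fin.sum_univ_three, Matrix.vecMul,
        Matrix.vecHead, Matrix.vecTail, dotProduct]
    -- entries of A = D * V
    have h00 : A 0 0 = d * V 0 0 := by rw [hAV, Matrix.diagonal_mul]; norm_num
    have h11 : A 1 1 = e * V 1 1 := by rw [hAV, Matrix.diagonal_mul]; norm_num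
    have h22 : A 2 2 = f * V 2 2 := by rw [hAV, Matrix.diagonal_mul]; norm_num; exact Or.inl rfl
    have h01 : A 0 1 = d * V 0 1 := by rw [hAV, Matrix.diagonal_mul]; norm_num
    have h12 : A 1 2 = e * V 1 2 := by rw [hAV, Matrix.diagonal_mul]; norm_num
    have h10 : A 1 0 = e * V 1 0 := by rw [hAV, Matrix.diagonal_mul]; norm_num
    have h21 : A 2 1 = f * V 2 1 := by rw [hAV, Matrix.diagonal_mul]; norm_num; exact Or.inl rfl
    -- derive: middle row of V is zero
    have e1 : d * V 0 0 = e * V 1 1 := by rw [← h00, ← h11, hA00]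
    have e2 : e * V 1 1 = f * V 0 0 := by rw [← h11, hA11, h22, ← hp00]
    have hV00 : V 0 0 = 0 := by
      have h3 : (d - f) * V 0 0 = 0 := by linear_combination e1 + e2
      exact (mul_eq_zero.mp h3).resolve_left (sub_ne_zero.mpr (Ne.symm hfd))
    have hV11 : V 1 1 = 0 := by
      have h3 : e * V 1 1 = 0 := by rw [← e1, hV00, mul_zero]
      exact (mul_eq_zero.mp h3).resolve_left he
    have hV10 : V 1 0 = 0 := by
      have e3 : e * V 1 0 = f * V 1 0 := by rw [← h10, hA10, h21, ← hp10]
      have h3 : (e - f) * V 1 0 = 0 := by linear_combination e3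
      exact (mul_eq_zero.mp h3).resolve_left (sub_ne_zero.mpr hef)
    have hV12 : V 1 2 = 0 := by
      have e3 : d * V 1 2 = e * V 1 2 := by rw [← hp01, ← h01, hA01, h12, hp01]
      have h3 : (d - e) * V 1 2 = 0 := by linear_combination e3
      exact (mul_eq_zero.mp h3).resolve_left (sub_ne_zero.mpr hde)
    -- contradiction with V * B = 1 at entry (1,1)
    have hcon : (V * B) 1 1 = (1 : Matrix (Fin 3) (Fin 3) ℂ) 1 1 := by rw [hl]
    rw [Matrix.mul_apply, Fin.sum_univ_three] at hcon
    rw [hV10, hV11, hV12] at hcon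
    simp at hcon
  · -- B singular
    have hdet0 : B.det = 0 := by
      by_contra h
      exact hdet (isUnit_iff_ne_zero.mpr h)
    obtain ⟨v, hv0, hv⟩ := Matrix.exists_mulVec_eq_zero_iff.mpr hdet0
    have hDv : Matrix.diagonal ![d, e, f] *ᵥ v = 0 := by
      rw [← hprod, ← Matrix.mulVec_mulVec, hv, Matrix.mulVec_zero]
    have hd0 : d * v 0 = 0 := by
      have := congrFun hDv 0
      simpa [Matrix.mulVec_diagonal] using this
    have he0 : e * v 1 = 0 := by
      have := congrFun hDv 1
      simpa [Matrix.mulVec_diagonal] using this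
    have hf0 : f * v 2 = 0 := by
      have := congrFun hDv 2
      simpa [Matrix.mulVec_diagonal] using this
    have hv1 : v 1 = 0 := (mul_eq_zero.mp he0).resolve_left he
    -- product entry equations
    have hP : ∀ i j, A i 0 * B 0 j + A i 1 * B 1 j + A i 2 * B 2 j
        = Matrix.diagonal ![d, e, f] i j := by
      intro i j
      have := congrFun (congrFun hprod i) j
      rwa [Matrix.mul_apply, Fin.sum_univ_three] at this
    by_cases hd : d = 0
    · -- then f ≠ 0, v 2 = 0, v 0 ≠ 0, first column of B is zero; get e = f
      have hf : f ≠ 0 := fun h => hfd (h.trans hd.symm)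
      have hv2 : v 2 = 0 := (mul_eq_zero.mp hf0).resolve_left hf
      have hv0' : v 0 ≠ 0 := by
        intro h
        apply hv0
        funext i
        fin_cases i <;> simpa [h, hv1, hv2]
      have hcol : ∀ i, B i 0 = 0 := by
        intro i
        have h := congrFun hv i
        rw [Matrix.mulVec, dotProduct, Fin.sum_univ_three] at h
        rw [hv1, hv2] at h
        simp at h
        rcases h with h | h
        · exact h
        · exact absurd h hv0'
      have hB11' : B 1 1 = 0 := by rw [← hB00]; exact hcol 0
      have hB21' : B 2 1 = 0 := by rw [← hB10]; exact hcol 1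
      have hB22' : B 2 2 = 0 := by rw [← hB11, ← hB00]; exact hcol 0
      have hPe : A 1 0 * B 0 1 = e := by
        have h := hP 1 1
        rw [hB11', hB21'] at h
        simpa [Matrix.diagonal] using h
      have hP21 : A 2 0 * B 0 1 = 0 := by
        have h := hP 2 1
        rw [hB11', hB21'] at h
        simpa [Matrix.diagonal] using h
      have hP22 : A 2 0 * B 0 2 + A 2 1 * B 1 2 = f := by
        have h := hP 2 2
        rw [hB22'] at h
        simpa [Matrix.diagonal] using h
      have hb' : B 0 1 ≠ 0 := by
        intro h
        rw [h, mul_zero] at hPe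
        exact he hPe.symm
      have hq : A 2 0 = 0 := (mul_eq_zero.mp hP21).resolve_right hb'
      apply hef
      rw [← hPe, ← hP22, hq, hA10, hB01]
      ring
    · -- d ≠ 0, so v 0 = 0; then f = 0, third column of B zero; get d = e
      have hv0'' : v 0 = 0 := (mul_eq_zero.mp hd0).resolve_left hd
      have hf : f = 0 := by
        by_contra hf
        have hv2 : v 2 = 0 := (mul_eq_zero.mp hf0).resolve_left hf
        apply hv0
        funext i
        fin_cases i <;> simpa [hv0'', hv1, hv2]
      have hv2' : v 2 ≠ 0 := by
        intro h
        apply hv0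
        funext i
        fin_cases i <;> simpa [hv0'', hv1, h]
      have hcol : ∀ i, B i 2 = 0 := by
        intro i
        have h := congrFun hv i
        rw [Matrix.mulVec, dotProduct, Fin.sum_univ_three] at h
        rw [hv0'', hv1] at h
        simp at h
        rcases h with h | h
        · exact h
        · exact absurd h hv2'
      have hB01' : B 0 1 = 0 := by rw [hB01]; exact hcol 1
      have hB11'' : B 1 1 = 0 := by rw [hB11]; exact hcol 2
      have hB00' : B 0 0 = 0 := by rw [hB00, hB11]; exact hcol 2
      have hPe : A 1 2 * B 2 1 = e := by
        have h := hP 1 1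
        rw [hB01', hB11''] at h
        simpa [Matrix.diagonal] using h
      have hP21 : A 2 2 * B 2 1 = 0 := by
        have h := hP 2 1
        rw [hB01', hB11''] at h
        simpa [Matrix.diagonal] using h
      have hP10 : A 1 1 * B 1 0 + A 1 2 * B 2 0 = 0 := by
        have h := hP 1 0
        rw [hB00'] at h
        simpa [Matrix.diagonal] using h
      have hP00 : A 0 1 * B 1 0 + A 0 2 * B 2 0 = d := by
        have h := hP 0 0
        rw [hB00'] at h
        simpa [Matrix.diagonal] using h
      have hb : A 1 2 ≠ 0 := by
        intro h
        rw [h, zero_mul] at hPe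
        exact he hPe.symm
      have hp' : B 2 1 ≠ 0 := by
        intro h
        rw [h, mul_zero] at hPe
        exact he hPe.symm
      have ha : A 1 1 = 0 := by
        have h := hP21
        rw [← hA11] at h
        exact (mul_eq_zero.mp h).resolve_right hp'
      have hq' : B 2 0 = 0 := by
        rw [ha, zero_mul, zero_add] at hP10
        exact (mul_eq_zero.mp hP10).resolve_left hb
      apply hde
      rw [← hPe, ← hP00, hq', hA01, ← hB10]
      ring
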